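/- arXiv:2208.05435 — 4 statements merged into one kernel-verified Lean document; each statement's English description precedes it below -/
import Mathlib

section
/- Suppose there is a nontrivial solution u of the Euler–Lagrange (marginal-stability) equation (f u')' − g u = 0 on [r₁, r₂] with u(r₁) = 0 which also vanishes at some point r₀ with r₁ < r₀ < r₂. Then for every C² solution ξ₀ of the Euler–Lagrange equation on [r₁, r₂] there exists a continuous, piecewise continuously differentiable function ξ : [r₁, r₂] → ℝ with ξ(r₁) = ξ₀(r₁) and ξ(r₂) = ξ₀(r₂) such that W(r₁, r₂; ξ) < W(r₁, r₂; ξ₀). (Newcomb's Theorem, Appendix D, Theorem 1.) -/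
open Set MeasureTheory intervalIntegral


/-- A function is continuous and piecewise continuously differentiable on `[r₁, r₂]`:
it is continuous on the interval and, away from a finite exceptional set of points,
it is differentiable with continuous derivative. -/
def PiecewiseC1On (ξ : ℝ → ℝ) (r₁ r₂ : ℝ) : Prop :=
  ContinuousOn ξ (Set.Icc r₁ r₂) ∧
    ∃ S : Finset ℝ, ∀ x ∈ Set.Icc r₁ r₂, x ∉ S →
      DifferentiableAt ℝ ξ x ∧ ContinuousAt (deriv ξ) x

/-- The energy functional `W(r₁, r₂; ξ) = (π/2) ∫_{r₁}^{r₂} (f ξ'² + g ξ²)`. -/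
noncomputable def energyW (f g : ℝ → ℝ) (r₁ r₂ : ℝ) (ξ : ℝ → ℝ) : ℝ :=
  (Real.pi / 2) * ∫ r in r₁..r₂, (f r * (deriv ξ r) ^ 2 + g r * (ξ r) ^ 2)

/-- `u` (with derivative `u'`) solves the Euler–Lagrange (marginal-stability)
equation `(f u')' − g u = 0` on `[r₁, r₂]`. -/
def SolvesEulerLagrange (f g : ℝ → ℝ) (r₁ r₂ : ℝ) (u u' : ℝ → ℝ) : Prop :=
  (∀ r ∈ Set.Icc r₁ r₂, HasDerivAt u (u' r) r) ∧
    (∀ r ∈ Set.Icc r₁ r₂, HasDerivAt (fun s => f s * u' s) (g r * u r) r)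

private lemma ftc_aux {F F' : ℝ → ℝ} {a b : ℝ} (hab : a ≤ b)
    (hc : ContinuousOn F (Icc a b))
    (hd : ∀ x ∈ Ioo a b, HasDerivAt F (F' x) x)
    (hi : IntervalIntegrable F' volume a b) :
    ∫ x in a..b, F' x = F b - F a :=
  integral_eq_sub_of_hasDeriv_right_of_le hab hc
    (fun x hx => ((hd x hx).hasDerivWithinAt : HasDerivWithinAt F (F' x) (Ioi x) x)) hi

private lemma intervalIntegrable_congr_Ioc {p q : ℝ → ℝ} {a b : ℝ} (hab : a ≤ b)
    (h : ∀ x ∈ Ioc a b, p x = q x) (hq : IntervalIntegrable q volume a b) :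
    IntervalIntegrable p volume a b := by
  rw [intervalIntegrable_iff_integrableOn_Ioc_of_le hab] at *
  exact hq.congr_fun (fun x hx => (h x hx).symm) measurableSet_Ioc

private lemma intervalIntegral_congr_Ioc {p q : ℝ → ℝ} {a b : ℝ} (hab : a ≤ b)
    (h : ∀ x ∈ Ioc a b, p x = q x) : ∫ x in a..b, p x = ∫ x in a..b, q x :=
  intervalIntegral.integral_congr_ae (Filter.Eventually.of_forall
    (fun x hx => h x (by rwa [Set.uIoc_of_le hab] at hx)))

/-- Integration by parts for the Euler–Lagrange pairing. -/
private lemma pairing_eq {f g : ℝ → ℝ} {a b : ℝ} (hab : a ≤ b)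
    {w w' ψ ψ' : ℝ → ℝ}
    (hw' : ∀ r ∈ Icc a b, HasDerivAt (fun s => f s * w' s) (g r * w r) r)
    (hψ : ∀ r ∈ Icc a b, HasDerivAt ψ (ψ' r) r)
    (hi : IntervalIntegrable (fun r => f r * w' r * ψ' r + g r * w r * ψ r) volume a b) :
    ∫ r in a..b, (f r * w' r * ψ' r + g r * w r * ψ r)
      = f b * w' b * ψ b - f a * w' a * ψ a := by
  have hF : ∀ x ∈ Ioo a b, HasDerivAt (fun s => f s * w' s * ψ s)
      (f x * w' x * ψ' x + g x * w x * ψ x) x := by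
    intro x hx
    have h := (hw' x (Ioo_subset_Icc_self hx)).mul (hψ x (Ioo_subset_Icc_self hx))
    rw [show f x * w' x * ψ' x + g x * w x * ψ x = g x * w x * ψ x + f x * w' x * ψ' x by ring]
    exact h
  have hc : ContinuousOn (fun s => f s * w' s * ψ s) (Icc a b) := fun x hx =>
    ((hw' x hx).continuousAt.mul (hψ x hx).continuousAt).continuousWithinAt
  exact ftc_aux hab hc hF hi

private lemma u_deriv_ne_zero
    (r₁ r₂ : ℝ) (hr : r₁ < r₂) (f g : ℝ → ℝ)
    (hf : ContinuousOn f (Icc r₁ r₂)) (hg : ContinuousOn g (Icc r₁ r₂))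
    (hfpos : ∀ r ∈ Icc r₁ r₂, 0 < f r)
    (u u' : ℝ → ℝ)
    (hu1 : ∀ r ∈ Icc r₁ r₂, HasDerivAt u (u' r) r)
    (hu2 : ∀ r ∈ Icc r₁ r₂, HasDerivAt (fun s => f s * u' s) (g r * u r) r)
    (hu_nontriv : ∃ r ∈ Icc r₁ r₂, u r ≠ 0)
    (r₀ : ℝ) (hr₀ : r₀ ∈ Ioo r₁ r₂) (hu0 : u r₀ = 0) : u' r₀ ≠ 0 := by
  intro hd0
  have hle : r₁ ≤ r₂ := hr.le
  set cl : ℝ → ℝ := fun t => max r₁ (min t r₂) with hcl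
  have hclmem : ∀ t, cl t ∈ Icc r₁ r₂ := fun t =>
    ⟨le_max_left _ _, max_le hle (min_le_right _ _)⟩
  have hclid : ∀ t ∈ Icc r₁ r₂, cl t = t := fun t ht => by
    simp only [hcl]
    rw [min_eq_left ht.2, max_eq_right ht.1]
  obtain ⟨xm, hxm, hminOn⟩ := isCompact_Icc.exists_isMinOn ⟨r₁, le_refl r₁, hle⟩ hf
  obtain ⟨xg, hxg, hmaxOn⟩ := isCompact_Icc.exists_isMaxOn ⟨r₁, le_refl r₁, hle⟩ hg.abs
  have hmin : ∀ z ∈ Icc r₁ r₂, f xm ≤ f z := fun z hz => isMinOn_iff.mp hminOn z hz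
  have hmax : ∀ z ∈ Icc r₁ r₂, |g z| ≤ |g xg| := fun z hz => isMaxOn_iff.mp hmaxOn z hz
  have hm : 0 < f xm := hfpos xm hxm
  set Kr : ℝ := max (f xm)⁻¹ |g xg| with hKr
  have hKr0 : 0 ≤ Kr := le_trans (inv_nonneg.mpr hm.le) (le_max_left _ _)
  set K : NNReal := Kr.toNNReal with hK
  have hKcoe : (K : ℝ) = Kr := Real.coe_toNNReal _ hKr0
  set v : ℝ → ℝ × ℝ → ℝ × ℝ := fun t x => ((f (cl t))⁻¹ * x.2, g (cl t) * x.1) with hv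
  have hlip : ∀ t, LipschitzWith K (v t) := by
    intro t
    apply LipschitzWith.of_dist_le_mul
    intro x y
    have hb1 : |(f (cl t))⁻¹| ≤ Kr := by
      rw [abs_of_nonneg (inv_nonneg.mpr (hfpos _ (hclmem t)).le)]
      exact le_trans (inv_anti₀ hm (hmin _ (hclmem t))) (le_max_left _ _)
    have hb2 : |g (cl t)| ≤ Kr := le_trans (hmax _ (hclmem t)) (le_max_right _ _)
    rw [Prod.dist_eq]
    have h1 : dist ((f (cl t))⁻¹ * x.2) ((f (cl t))⁻¹ * y.2) ≤ Kr * dist x y := by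
      rw [Real.dist_eq, ← mul_sub, abs_mul]
      exact mul_le_mul hb1 (le_trans (le_of_eq (Real.dist_eq _ _).symm)
        (by rw [Prod.dist_eq]; exact le_max_right _ _ : dist x.2 y.2 ≤ dist x y))
        (abs_nonneg _) hKr0
    have h2 : dist (g (cl t) * x.1) (g (cl t) * y.1) ≤ Kr * dist x y := by
      rw [Real.dist_eq, ← mul_sub, abs_mul]
      exact mul_le_mul hb2 (le_trans (le_of_eq (Real.dist_eq _ _).symm)
        (by rw [Prod.dist_eq]; exact le_max_left _ _ : dist x.1 y.1 ≤ dist x y))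
        (abs_nonneg _) hKr0
    rw [hKcoe]
    exact max_le h1 h2
  set y : ℝ → ℝ × ℝ := fun r => (u r, f r * u' r) with hy
  have hy' : ∀ t ∈ Ioo r₁ r₂, HasDerivAt y (v t (y t)) t := by
    intro t ht
    have htI : t ∈ Icc r₁ r₂ := Ioo_subset_Icc_self ht
    have h := (hu1 t htI).prodMk (hu2 t htI)
    have hvy : v t (y t) = (u' t, g t * u t) := by
      simp only [hv, hy, hclid t htI]
      rw [inv_mul_cancel_left₀ (hfpos t htI).ne']
    rw [hvy]
    exact h
  have hz' : ∀ t ∈ Ioo r₁ r₂,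
      HasDerivAt (fun _ : ℝ => ((0 : ℝ), (0 : ℝ))) (v t ((0 : ℝ), (0 : ℝ))) t := by
    intro t ht
    have h0 : v t ((0 : ℝ), (0 : ℝ)) = ((0 : ℝ), (0 : ℝ)) := by simp [hv]
    rw [h0]
    exact hasDerivAt_const _ _
  have heq : EqOn y (fun _ : ℝ => ((0 : ℝ), (0 : ℝ))) (Icc r₁ r₂) := by
    apply ODE_solution_unique_of_mem_Icc (s := fun _ => univ)
      (fun t _ => (hlip t).lipschitzOnWith) hr₀
      (fun x hx => ((hu1 x hx).continuousAt.prodMk (hu2 x hx).continuousAt).continuousWithinAt)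
      hy' (fun _ _ => trivial) continuousOn_const hz' (fun _ _ => trivial)
    simp [hy, hu0, hd0]
  obtain ⟨r, hrI, hne⟩ := hu_nontriv
  exact hne (congrArg Prod.fst (heq hrI))

/-- **Newcomb's Theorem.**  If a nontrivial solution of the marginal-stability
Euler–Lagrange equation vanishing at `r₁` vanishes again at an interior point
`r₀ ∈ (r₁, r₂)`, then every C² Euler–Lagrange solution `ξ₀` can be beaten: there is
a continuous, piecewise continuously differentiable `ξ` with the same boundary values
and strictly smaller energy `W`. -/
theorem newcomb_theorem
    (r₁ r₂ : ℝ) (hr : r₁ < r₂) (f g : ℝ → ℝ)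
    (hf : ContinuousOn f (Set.Icc r₁ r₂)) (hg : ContinuousOn g (Set.Icc r₁ r₂))
    (hfpos : ∀ r ∈ Set.Icc r₁ r₂, 0 < f r)
    -- a nontrivial Euler–Lagrange solution vanishing at `r₁` and at an interior point `r₀`:
    (u u' : ℝ → ℝ)
    (hu : SolvesEulerLagrange f g r₁ r₂ u u')
    (hu_nontriv : ∃ r ∈ Set.Icc r₁ r₂, u r ≠ 0)
    (hu1 : u r₁ = 0)
    (r₀ : ℝ) (hr₀ : r₀ ∈ Set.Ioo r₁ r₂) (hu0 : u r₀ = 0) :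
    -- then for every C² solution `ξ₀` of the Euler–Lagrange equation:
    ∀ ξ₀ ξ₀' ξ₀'' : ℝ → ℝ,
      SolvesEulerLagrange f g r₁ r₂ ξ₀ ξ₀' →
      (∀ r ∈ Set.Icc r₁ r₂, HasDerivAt ξ₀' (ξ₀'' r) r) →
      ContinuousOn ξ₀'' (Set.Icc r₁ r₂) →
      ∃ ξ : ℝ → ℝ, PiecewiseC1On ξ r₁ r₂ ∧ ξ r₁ = ξ₀ r₁ ∧ ξ r₂ = ξ₀ r₂ ∧
        energyW f g r₁ r₂ ξ < energyW f g r₁ r₂ ξ₀ := by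
  intro ξ₀ ξ₀' ξ₀'' hξ₀ hξ₀'' _hcξ₀''
  obtain ⟨hr₀1, hr₀2⟩ := hr₀
  have hle : r₁ ≤ r₂ := hr.le
  have hr₀I : r₀ ∈ Icc r₁ r₂ := ⟨hr₀1.le, hr₀2.le⟩
  have hIcc1 : Icc r₁ r₀ ⊆ Icc r₁ r₂ := Icc_subset_Icc_right hr₀2.le
  have hu'0 : u' r₀ ≠ 0 :=
    u_deriv_ne_zero r₁ r₂ hr f g hf hg hfpos u u' hu.1 hu.2 hu_nontriv r₀ ⟨hr₀1, hr₀2⟩ hu0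
  -- continuity facts
  have hucont : ContinuousOn u (Icc r₁ r₂) := fun x hx =>
    (hu.1 x hx).continuousAt.continuousWithinAt
  have hfu'cont : ContinuousOn (fun s => f s * u' s) (Icc r₁ r₂) := fun x hx =>
    (hu.2 x hx).continuousAt.continuousWithinAt
  have hu'cont : ContinuousOn u' (Icc r₁ r₂) := by
    have h1 : ContinuousOn (fun s => (f s * u' s) / f s) (Icc r₁ r₂) :=
      hfu'cont.div hf (fun x hx => (hfpos x hx).ne')
    exact h1.congr (fun x hx => (mul_div_cancel_left₀ _ (hfpos x hx).ne').symm)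
  have hξ₀'cont : ContinuousOn ξ₀' (Icc r₁ r₂) := fun x hx =>
    (hξ₀'' x hx).continuousAt.continuousWithinAt
  have hξ₀cont : ContinuousOn ξ₀ (Icc r₁ r₂) := fun x hx =>
    (hξ₀.1 x hx).continuousAt.continuousWithinAt
  -- bump function
  set ρ : ℝ := min (r₀ - r₁) (r₂ - r₀) with hρdef
  have hρ1 : ρ ≤ r₀ - r₁ := min_le_left _ _
  have hρ2 : ρ ≤ r₂ - r₀ := min_le_right _ _
  have hρpos : 0 < ρ := lt_min (by linarith) (by linarith)
  set φb : ContDiffBump r₀ := ⟨ρ / 2, ρ, by linarith, by linarith⟩ with hφbdef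
  set φ : ℝ → ℝ := fun x => φb x with hφdef
  have hφsm : ContDiff ℝ 1 φ := φb.contDiff
  have hφdiff : ∀ x : ℝ, HasDerivAt φ (deriv φ x) x := fun x =>
    ((hφsm.differentiable one_ne_zero) x).hasDerivAt
  have hφ'cont : Continuous (deriv φ) := hφsm.continuous_deriv le_rfl
  have hφcont : Continuous φ := hφsm.continuous
  have hφr₀ : φ r₀ = 1 := φb.one_of_mem_closedBall (Metric.mem_closedBall_self φb.rIn_pos.le)
  have hφr₁ : φ r₁ = 0 := by
    apply φb.zero_of_le_dist
    rw [Real.dist_eq, abs_of_nonpos (by linarith)]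
    show (φb.rOut : ℝ) ≤ -(r₁ - r₀)
    simp only [hφbdef]
    linarith
  have hφr₂ : φ r₂ = 0 := by
    apply φb.zero_of_le_dist
    rw [Real.dist_eq, abs_of_nonneg (by linarith)]
    show (φb.rOut : ℝ) ≤ r₂ - r₀
    simp only [hφbdef]
    linarith
  -- constants
  set C : ℝ := f r₀ * u' r₀ with hCdef
  have hC0 : C ≠ 0 := mul_ne_zero (hfpos r₀ hr₀I).ne' hu'0
  set Wφ : ℝ := ∫ r in r₁..r₂, (f r * (deriv φ r) ^ 2 + g r * (φ r) ^ 2) with hWφdef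
  set ε : ℝ := -C / (1 + |Wφ|) with hεdef
  -- the competitor
  set ζ : ℝ → ℝ := fun r => if r ≤ r₀ then u r else 0 with hζdef
  set ζd : ℝ → ℝ := fun r => if r ≤ r₀ then u' r else 0 with hζddef
  set ξc : ℝ → ℝ := fun r => ξ₀ r + (ζ r + ε * φ r) with hξcdef
  set D : ℝ → ℝ := fun r => ξ₀' r + (ζd r + ε * deriv φ r) with hDdef
  -- continuity of ζ
  have hζcont : ContinuousOn ζ (Icc r₁ r₂) := by
    intro x hx
    rcases lt_trichotomy x r₀ with hlt | hxeq | hgt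
    · have hev : u =ᶠ[nhds x] ζ := by
        filter_upwards [Iio_mem_nhds hlt] with y hy
        simp [hζdef, (mem_Iio.mp hy).le]
      exact ((hu.1 x hx).continuousAt.congr hev).continuousWithinAt
    · have hub : Filter.Tendsto ζ (nhds r₀) (nhds 0) := by
        rw [tendsto_zero_iff_norm_tendsto_zero]
        apply squeeze_zero (g := fun y => |u y|) (fun y => norm_nonneg _)
        · intro y
          simp only [hζdef, Real.norm_eq_abs]
          split
          · exact le_refl _
          · simp [abs_nonneg]
        · have h1 : Filter.Tendsto (fun y => |u y|) (nhds r₀) (nhds |u r₀|) :=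
            (hu.1 r₀ hr₀I).continuousAt.abs
          rwa [hu0, abs_zero] at h1
      have hζ0 : ζ r₀ = 0 := by simp [hζdef, hu0]
      have : ContinuousAt ζ r₀ := by
        unfold ContinuousAt
        rw [hζ0]
        exact hub
      rw [hxeq]
      exact this.continuousWithinAt
    · have hev : (fun _ : ℝ => (0 : ℝ)) =ᶠ[nhds x] ζ := by
        filter_upwards [Ioi_mem_nhds hgt] with y hy
        simp [hζdef, not_le.mpr (mem_Ioi.mp hy)]
      exact (continuousAt_const.congr hev).continuousWithinAt
  -- derivative of ξc away from r₀
  have hζD : ∀ x ∈ Icc r₁ r₂, x ≠ r₀ → HasDerivAt ζ (ζd x) x := by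
    intro x hx hne
    rcases hne.lt_or_gt with hlt | hgt
    · have hev : ζ =ᶠ[nhds x] u := by
        filter_upwards [Iio_mem_nhds hlt] with y hy
        simp [hζdef, (mem_Iio.mp hy).le]
      have h := (hu.1 x hx).congr_of_eventuallyEq hev
      have hζdx : ζd x = u' x := by simp [hζddef, hlt.le]
      rw [hζdx]
      exact h
    · have hev : ζ =ᶠ[nhds x] (fun _ => (0 : ℝ)) := by
        filter_upwards [Ioi_mem_nhds hgt] with y hy
        simp [hζdef, not_le.mpr (mem_Ioi.mp hy)]
      have h := (hasDerivAt_const x (0 : ℝ)).congr_of_eventuallyEq hev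
      have hζdx : ζd x = 0 := by simp [hζddef, not_le.mpr hgt]
      rw [hζdx]
      exact h
  have hξD : ∀ x ∈ Icc r₁ r₂, x ≠ r₀ → HasDerivAt ξc (D x) x := fun x hx hne =>
    (hξ₀.1 x hx).add ((hζD x hx hne).add ((hφdiff x).const_mul ε))
  have hderivξ : ∀ x ∈ Icc r₁ r₂, x ≠ r₀ → deriv ξc x = D x := fun x hx hne =>
    (hξD x hx hne).deriv
  -- piecewise C¹
  have hPW : PiecewiseC1On ξc r₁ r₂ := by
    constructor
    · exact hξ₀cont.add (hζcont.add ((continuous_const.mul hφcont).continuousOn))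
    · refine ⟨{r₁, r₀, r₂}, ?_⟩
      intro x hx hxS
      simp only [Finset.mem_insert, Finset.mem_singleton, not_or] at hxS
      obtain ⟨hx1, hx0, hx2⟩ := hxS
      have hxo : x ∈ Ioo r₁ r₂ := ⟨lt_of_le_of_ne hx.1 (Ne.symm hx1), lt_of_le_of_ne hx.2 hx2⟩
      refine ⟨(hξD x hx hx0).differentiableAt, ?_⟩
      have hfA : ContinuousAt f x := (hf x hx).continuousAt (Icc_mem_nhds hxo.1 hxo.2)
      have hu'A : ContinuousAt u' x := by
        have h1 : ContinuousAt (fun s => (f s * u' s) / f s) x :=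
          (hu.2 x hx).continuousAt.div hfA (hfpos x hx).ne'
        apply h1.congr
        filter_upwards [Icc_mem_nhds hxo.1 hxo.2] with y hy
        rw [mul_div_cancel_left₀ _ (hfpos y hy).ne']
      have hξ₀'A : ContinuousAt ξ₀' x := (hξ₀'' x hx).continuousAt
      rcases Ne.lt_or_gt hx0 with hlt | hgt
      · have hca : ContinuousAt (fun y => ξ₀' y + (u' y + ε * deriv φ y)) x :=
          hξ₀'A.add (hu'A.add (continuousAt_const.mul hφ'cont.continuousAt))
        apply hca.congr
        filter_upwards [Ioo_mem_nhds hxo.1 hlt] with y hy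
        rw [hderivξ y ⟨hy.1.le, le_trans hy.2.le hr₀2.le⟩ (ne_of_lt hy.2)]
        simp [hDdef, hζddef, hy.2.le]
      · have hca : ContinuousAt (fun y => ξ₀' y + (0 + ε * deriv φ y)) x :=
          hξ₀'A.add (continuousAt_const.add (continuousAt_const.mul hφ'cont.continuousAt))
        apply hca.congr
        filter_upwards [Ioo_mem_nhds hgt hxo.2] with y hy
        rw [hderivξ y ⟨le_trans hr₀1.le hy.1.le, hy.2.le⟩ (ne_of_gt hy.1)]
        simp [hDdef, hζddef, not_le.mpr hy.1]
  -- boundary values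
  have hb1 : ξc r₁ = ξ₀ r₁ := by simp [hξcdef, hζdef, hr₀1.le, hu1, hφr₁]
  have hb2 : ξc r₂ = ξ₀ r₂ := by simp [hξcdef, hζdef, not_le.mpr hr₀2, hφr₂]
  -- the six integrands
  set N₀ : ℝ → ℝ := fun r => f r * (ξ₀' r) ^ 2 + g r * (ξ₀ r) ^ 2 with hN₀def
  set Xζ : ℝ → ℝ := fun r => f r * ξ₀' r * ζd r + g r * ξ₀ r * ζ r with hXζdef
  set Xφ : ℝ → ℝ := fun r => f r * ξ₀' r * deriv φ r + g r * ξ₀ r * φ r with hXφdef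
  set Yζ : ℝ → ℝ := fun r => f r * (ζd r) ^ 2 + g r * (ζ r) ^ 2 with hYζdef
  set Z : ℝ → ℝ := fun r => f r * ζd r * deriv φ r + g r * ζ r * φ r with hZdef
  set Yφ : ℝ → ℝ := fun r => f r * (deriv φ r) ^ 2 + g r * (φ r) ^ 2 with hYφdef
  -- integrability
  have hN₀c : ContinuousOn N₀ (Icc r₁ r₂) :=
    (hf.mul (hξ₀'cont.pow 2)).add (hg.mul (hξ₀cont.pow 2))
  have hi0 : IntervalIntegrable N₀ volume r₁ r₂ := hN₀c.intervalIntegrable_of_Icc hle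
  have hIcc2 : Icc r₀ r₂ ⊆ Icc r₁ r₂ := Icc_subset_Icc_left hr₀1.le
  have hcXζ : ContinuousOn (fun r => f r * ξ₀' r * u' r + g r * ξ₀ r * u r) (Icc r₁ r₂) :=
    ((hf.mul hξ₀'cont).mul hu'cont).add ((hg.mul hξ₀cont).mul hucont)
  have hcYζ : ContinuousOn (fun r => f r * u' r * u' r + g r * u r * u r) (Icc r₁ r₂) :=
    ((hf.mul hu'cont).mul hu'cont).add ((hg.mul hucont).mul hucont)
  have hcZ : ContinuousOn (fun r => f r * u' r * deriv φ r + g r * u r * φ r) (Icc r₁ r₂) :=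
    ((hf.mul hu'cont).mul hφ'cont.continuousOn).add ((hg.mul hucont).mul hφcont.continuousOn)
  have hcXφ : ContinuousOn (fun r => f r * ξ₀' r * deriv φ r + g r * ξ₀ r * φ r) (Icc r₁ r₂) :=
    ((hf.mul hξ₀'cont).mul hφ'cont.continuousOn).add ((hg.mul hξ₀cont).mul hφcont.continuousOn)
  have hcYφ : ContinuousOn Yφ (Icc r₁ r₂) := by
    simp only [hYφdef]
    exact (hf.mul (hφ'cont.continuousOn.pow 2)).add (hg.mul (hφcont.continuousOn.pow 2))
  -- integrability of the pieces
  have hiXζ1 : IntervalIntegrable Xζ volume r₁ r₀ :=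
    intervalIntegrable_congr_Ioc hr₀1.le
      (fun x hx => by simp only [hXζdef, hζdef, hζddef, if_pos hx.2])
      ((hcXζ.mono hIcc1).intervalIntegrable_of_Icc hr₀1.le)
  have hiXζ2 : IntervalIntegrable Xζ volume r₀ r₂ :=
    intervalIntegrable_congr_Ioc (q := fun _ => (0 : ℝ)) hr₀2.le
      (fun x hx => by simp [hXζdef, hζdef, hζddef, not_le.mpr hx.1])
      intervalIntegrable_const
  have hiXζ : IntervalIntegrable Xζ volume r₁ r₂ := hiXζ1.trans hiXζ2
  have hiYζ1 : IntervalIntegrable Yζ volume r₁ r₀ :=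
    intervalIntegrable_congr_Ioc hr₀1.le
      (fun x hx => by simp only [hYζdef, hζdef, hζddef, if_pos hx.2]; ring)
      ((hcYζ.mono hIcc1).intervalIntegrable_of_Icc hr₀1.le)
  have hiYζ2 : IntervalIntegrable Yζ volume r₀ r₂ :=
    intervalIntegrable_congr_Ioc (q := fun _ => (0 : ℝ)) hr₀2.le
      (fun x hx => by simp [hYζdef, hζdef, hζddef, not_le.mpr hx.1])
      intervalIntegrable_const
  have hiYζ : IntervalIntegrable Yζ volume r₁ r₂ := hiYζ1.trans hiYζ2
  have hiZ1 : IntervalIntegrable Z volume r₁ r₀ :=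
    intervalIntegrable_congr_Ioc hr₀1.le
      (fun x hx => by simp only [hZdef, hζdef, hζddef, if_pos hx.2])
      ((hcZ.mono hIcc1).intervalIntegrable_of_Icc hr₀1.le)
  have hiZ2 : IntervalIntegrable Z volume r₀ r₂ :=
    intervalIntegrable_congr_Ioc (q := fun _ => (0 : ℝ)) hr₀2.le
      (fun x hx => by simp [hZdef, hζdef, hζddef, not_le.mpr hx.1])
      intervalIntegrable_const
  have hiZ : IntervalIntegrable Z volume r₁ r₂ := hiZ1.trans hiZ2
  have hiXφ : IntervalIntegrable Xφ volume r₁ r₂ := by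
    rw [hXφdef]
    exact hcXφ.intervalIntegrable_of_Icc hle
  have hiYφ : IntervalIntegrable Yφ volume r₁ r₂ := hcYφ.intervalIntegrable_of_Icc hle
  -- values of the integrals
  have hIXζ : (∫ r in r₁..r₂, Xζ r) = 0 := by
    rw [← intervalIntegral.integral_add_adjacent_intervals hiXζ1 hiXζ2]
    have h1 : (∫ r in r₁..r₀, Xζ r)
        = ∫ r in r₁..r₀, (f r * ξ₀' r * u' r + g r * ξ₀ r * u r) :=
      intervalIntegral_congr_Ioc hr₀1.le
        (fun x hx => by simp only [hXζdef, hζdef, hζddef, if_pos hx.2])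
    have h2 := pairing_eq hr₀1.le (w := ξ₀) (w' := ξ₀') (ψ := u) (ψ' := u')
      (fun r hrm => hξ₀.2 r (hIcc1 hrm)) (fun r hrm => hu.1 r (hIcc1 hrm))
      ((hcXζ.mono hIcc1).intervalIntegrable_of_Icc hr₀1.le)
    have h3 : (∫ r in r₀..r₂, Xζ r) = 0 := by
      rw [intervalIntegral_congr_Ioc (q := fun _ => (0 : ℝ)) hr₀2.le
        (fun x hx => by simp [hXζdef, hζdef, hζddef, not_le.mpr hx.1])]
      simp
    rw [h1, h2, h3, hu0, hu1]
    ring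
  have hIYζ : (∫ r in r₁..r₂, Yζ r) = 0 := by
    rw [← intervalIntegral.integral_add_adjacent_intervals hiYζ1 hiYζ2]
    have h1 : (∫ r in r₁..r₀, Yζ r)
        = ∫ r in r₁..r₀, (f r * u' r * u' r + g r * u r * u r) :=
      intervalIntegral_congr_Ioc hr₀1.le
        (fun x hx => by simp only [hYζdef, hζdef, hζddef, if_pos hx.2]; ring)
    have h2 := pairing_eq hr₀1.le (w := u) (w' := u') (ψ := u) (ψ' := u')
      (fun r hrm => hu.2 r (hIcc1 hrm)) (fun r hrm => hu.1 r (hIcc1 hrm))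
      ((hcYζ.mono hIcc1).intervalIntegrable_of_Icc hr₀1.le)
    have h3 : (∫ r in r₀..r₂, Yζ r) = 0 := by
      rw [intervalIntegral_congr_Ioc (q := fun _ => (0 : ℝ)) hr₀2.le
        (fun x hx => by simp [hYζdef, hζdef, hζddef, not_le.mpr hx.1])]
      simp
    rw [h1, h2, h3, hu0, hu1]
    ring
  have hIZ : (∫ r in r₁..r₂, Z r) = C := by
    rw [← intervalIntegral.integral_add_adjacent_intervals hiZ1 hiZ2]
    have h1 : (∫ r in r₁..r₀, Z r)
        = ∫ r in r₁..r₀, (f r * u' r * deriv φ r + g r * u r * φ r) :=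
      intervalIntegral_congr_Ioc hr₀1.le
        (fun x hx => by simp only [hZdef, hζdef, hζddef, if_pos hx.2])
    have h2 := pairing_eq hr₀1.le (w := u) (w' := u') (ψ := φ) (ψ' := deriv φ)
      (fun r hrm => hu.2 r (hIcc1 hrm)) (fun r _ => hφdiff r)
      ((hcZ.mono hIcc1).intervalIntegrable_of_Icc hr₀1.le)
    have h3 : (∫ r in r₀..r₂, Z r) = 0 := by
      rw [intervalIntegral_congr_Ioc (q := fun _ => (0 : ℝ)) hr₀2.le
        (fun x hx => by simp [hZdef, hζdef, hζddef, not_le.mpr hx.1])]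
      simp
    rw [h1, h2, h3, hφr₀, hφr₁, hCdef]
    ring
  have hIXφ : (∫ r in r₁..r₂, Xφ r) = 0 := by
    have h2 := pairing_eq hle (w := ξ₀) (w' := ξ₀') (ψ := φ) (ψ' := deriv φ)
      hξ₀.2 (fun r _ => hφdiff r) (hcXφ.intervalIntegrable_of_Icc hle)
    rw [hXφdef, h2, hφr₁, hφr₂]
    ring
  -- first congruence: replace deriv ξc by D
  have hstep1 : (∫ r in r₁..r₂, (f r * (deriv ξc r) ^ 2 + g r * (ξc r) ^ 2))
      = ∫ r in r₁..r₂, (f r * (D r) ^ 2 + g r * (ξc r) ^ 2) := by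
    apply intervalIntegral.integral_congr_ae
    have h0 : ∀ᵐ (x : ℝ) ∂(volume : Measure ℝ), x ≠ r₀ := by
      rw [ae_iff]
      have hset : {x : ℝ | ¬x ≠ r₀} = {r₀} := by ext x; simp
      rw [hset]
      exact measure_singleton r₀
    filter_upwards [h0] with x hx0 hxI
    rw [Set.uIoc_of_le hle] at hxI
    rw [hderivξ x ⟨hxI.1.le, hxI.2⟩ hx0]
  -- pointwise decomposition
  have hdecomp : ∀ r : ℝ, f r * (D r) ^ 2 + g r * (ξc r) ^ 2
      = N₀ r + (2 * Xζ r + (2 * ε * Xφ r + (Yζ r + (2 * ε * Z r + ε ^ 2 * Yφ r)))) := by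
    intro r
    simp only [hDdef, hξcdef, hN₀def, hXζdef, hXφdef, hYζdef, hZdef, hYφdef]
    ring
  have hstep2 : (∫ r in r₁..r₂, (f r * (D r) ^ 2 + g r * (ξc r) ^ 2))
      = (∫ r in r₁..r₂, N₀ r) + (2 * ε * C + ε ^ 2 * Wφ) := by
    rw [intervalIntegral.integral_congr (g := fun r =>
      N₀ r + (2 * Xζ r + (2 * ε * Xφ r + (Yζ r + (2 * ε * Z r + ε ^ 2 * Yφ r)))))
      (fun x _ => hdecomp x)]
    rw [intervalIntegral.integral_add hi0 ((hiXζ.const_mul 2).add ((hiXφ.const_mul (2 * ε)).add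
      (hiYζ.add ((hiZ.const_mul (2 * ε)).add (hiYφ.const_mul (ε ^ 2))))))]
    rw [intervalIntegral.integral_add (hiXζ.const_mul 2) ((hiXφ.const_mul (2 * ε)).add
      (hiYζ.add ((hiZ.const_mul (2 * ε)).add (hiYφ.const_mul (ε ^ 2)))))]
    rw [intervalIntegral.integral_add (hiXφ.const_mul (2 * ε))
      (hiYζ.add ((hiZ.const_mul (2 * ε)).add (hiYφ.const_mul (ε ^ 2))))]
    rw [intervalIntegral.integral_add hiYζ ((hiZ.const_mul (2 * ε)).add (hiYφ.const_mul (ε ^ 2)))]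
    rw [intervalIntegral.integral_add (hiZ.const_mul (2 * ε)) (hiYφ.const_mul (ε ^ 2))]
    rw [intervalIntegral.integral_const_mul, intervalIntegral.integral_const_mul,
      intervalIntegral.integral_const_mul, intervalIntegral.integral_const_mul]
    rw [hIXζ, hIXφ, hIYζ, hIZ]
    have hYφW : (∫ r in r₁..r₂, Yφ r) = Wφ := by
      simp only [hYφdef, hWφdef]
    rw [hYφW]
    ring
  have hstep0 : (∫ r in r₁..r₂, (f r * (deriv ξ₀ r) ^ 2 + g r * (ξ₀ r) ^ 2))
      = ∫ r in r₁..r₂, N₀ r := by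
    apply intervalIntegral_congr_Ioc hle
    intro x hx
    simp only [hN₀def]
    rw [(hξ₀.1 x ⟨hx.1.le, hx.2⟩).deriv]
  -- the sign of the correction
  have hC2 : 0 < C ^ 2 := lt_of_le_of_ne (sq_nonneg C) (Ne.symm (pow_ne_zero 2 hC0))
  have hs : (0 : ℝ) < 1 + |Wφ| := by positivity
  have habs : Wφ ≤ |Wφ| := le_abs_self Wφ
  have hneg : 2 * ε * C + ε ^ 2 * Wφ < 0 := by
    have key : 2 * ε * C + ε ^ 2 * Wφ = (C ^ 2 / (1 + |Wφ|) ^ 2) * (Wφ - 2 * (1 + |Wφ|)) := by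
      rw [hεdef]
      field_simp
      ring
    rw [key]
    apply mul_neg_of_pos_of_neg
    · exact div_pos hC2 (by positivity)
    · linarith
  refine ⟨ξc, hPW, hb1, hb2, ?_⟩
  unfold energyW
  rw [hstep1, hstep2, hstep0]
  have hπ : (0 : ℝ) < Real.pi / 2 := by positivity
  have hfin : (∫ r in r₁..r₂, N₀ r) + (2 * ε * C + ε ^ 2 * Wφ) < ∫ r in r₁..r₂, N₀ r := by
    linarith
  exact mul_lt_mul_of_pos_left hfin hπ
end

section
/- Suppose u is a C² solution of the Euler–Lagrange (marginal-stability) equation (f u')' − g u = 0 on [r₁, r₂] with u(r₁) = 0 and u'(r₁) = 1, and suppose u(r) ≠ 0 for all r with r₁ < r ≤ r₂ (the solution started from a zero at r₁ has no further zero on the interval). Then W(r₁, r₂; ξ) ≥ 0 for every continuous, piecewise continuously differentiable ξ : [r₁, r₂] → ℝ with ξ(r₁) = ξ(r₂) = 0. (The stable direction of Newcomb's criterion: if the marginal ballooning solution has no zero, the equilibrium is stable.) -/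
open MeasureTheory intervalIntegral Set Filter Topology

/-- FTC-2 allowing a finite exceptional set. -/
lemma ftc_finset (φ φ' : ℝ → ℝ) (S : Finset ℝ) :
    ∀ a b : ℝ, a ≤ b → ContinuousOn φ (Set.Icc a b) →
      (∀ x ∈ Set.Ioo a b, x ∉ S → HasDerivAt φ (φ' x) x) →
      IntervalIntegrable φ' volume a b →
      ∫ y in a..b, φ' y = φ b - φ a := by
  induction S using Finset.induction_on with
  | empty =>
    intro a b hab hcont hderiv hint
    exact integral_eq_sub_of_hasDeriv_right_of_le hab hcont
      (fun x hx => ((hderiv x hx (by simp)).hasDerivWithinAt)) hint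
  | @insert c S hc IH =>
    intro a b hab hcont hderiv hint
    by_cases hcab : c ∈ Set.Ioo a b
    · have h1 : ∫ y in a..c, φ' y = φ c - φ a := by
        have hintl : IntervalIntegrable φ' volume a c := by
          refine hint.mono_set ?_
          rw [Set.uIcc_of_le hcab.1.le, Set.uIcc_of_le hab]
          exact Icc_subset_Icc le_rfl hcab.2.le
        refine IH a c hcab.1.le (hcont.mono (Icc_subset_Icc le_rfl hcab.2.le)) ?_ hintl
        intro x hx hxS
        refine hderiv x ⟨hx.1, hx.2.trans hcab.2⟩ ?_
        simp only [Finset.mem_insert, not_or]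
        exact ⟨ne_of_lt hx.2, hxS⟩
      have h2 : ∫ y in c..b, φ' y = φ b - φ c := by
        have hintr : IntervalIntegrable φ' volume c b := by
          refine hint.mono_set ?_
          rw [Set.uIcc_of_le hcab.2.le, Set.uIcc_of_le hab]
          exact Icc_subset_Icc hcab.1.le le_rfl
        refine IH c b hcab.2.le (hcont.mono (Icc_subset_Icc hcab.1.le le_rfl)) ?_ hintr
        intro x hx hxS
        refine hderiv x ⟨hcab.1.trans hx.1, hx.2⟩ ?_
        simp only [Finset.mem_insert, not_or]
        exact ⟨(ne_of_gt hx.1), hxS⟩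
      have hintl : IntervalIntegrable φ' volume a c := by
        refine hint.mono_set ?_
        rw [Set.uIcc_of_le hcab.1.le, Set.uIcc_of_le hab]
        exact Icc_subset_Icc le_rfl hcab.2.le
      have hintr : IntervalIntegrable φ' volume c b := by
        refine hint.mono_set ?_
        rw [Set.uIcc_of_le hcab.2.le, Set.uIcc_of_le hab]
        exact Icc_subset_Icc hcab.1.le le_rfl
      rw [← integral_add_adjacent_intervals hintl hintr, h1, h2]
      ring
    · refine IH a b hab hcont ?_ hint
      intro x hx hxS
      refine hderiv x hx ?_
      simp only [Finset.mem_insert, not_or]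
      exact ⟨fun h => hcab (h ▸ hx), hxS⟩

/-- Cauchy–Schwarz for interval integrals (via AM–GM). -/
lemma cs_interval (ψ : ℝ → ℝ) (a b : ℝ) (hab : a ≤ b)
    (hψ : IntervalIntegrable ψ volume a b)
    (hψ2 : IntervalIntegrable (fun x => ψ x ^ 2) volume a b) :
    (∫ x in a..b, |ψ x|) ^ 2 ≤ (b - a) * ∫ x in a..b, ψ x ^ 2 := by
  set A : ℝ := ∫ x in a..b, ψ x ^ 2 with hA
  set B : ℝ := ∫ x in a..b, |ψ x| with hB
  have hA0 : 0 ≤ A := integral_nonneg hab (fun x _ => sq_nonneg _)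
  have hB0 : 0 ≤ B := integral_nonneg hab (fun x _ => abs_nonneg _)
  have key : ∀ ε : ℝ, 0 < ε → B ≤ (ε * (b - a) + A / ε) / 2 := by
    intro ε hε
    have hle : ∀ x ∈ Set.Icc a b, |ψ x| ≤ (ε + ψ x ^ 2 / ε) / 2 := by
      intro x _
      have h2 : |ψ x| ^ 2 = ψ x ^ 2 := sq_abs _
      have h3 : 0 ≤ (|ψ x| - ε) ^ 2 := sq_nonneg _
      rw [le_div_iff₀ (by norm_num : (0:ℝ) < 2), ← sub_nonneg]
      have : (ε + ψ x ^ 2 / ε) - |ψ x| * 2 = ((|ψ x| - ε)^2) / ε := by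
        field_simp
        nlinarith [sq_abs (ψ x)]
      rw [this]
      positivity
    have hint2 : IntervalIntegrable (fun x => (ε + ψ x ^ 2 / ε) / 2) volume a b :=
      ((intervalIntegrable_const.add (hψ2.div_const ε)).div_const 2)
    have := integral_mono_on hab hψ.abs hint2 hle
    calc B ≤ ∫ x in a..b, (ε + ψ x ^ 2 / ε) / 2 := this
      _ = (ε * (b - a) + A / ε) / 2 := by
          rw [intervalIntegral.integral_div, integral_add intervalIntegrable_const (hψ2.div_const ε),
            intervalIntegral.integral_const, intervalIntegral.integral_div]
          simp only [smul_eq_mul, ← hA]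
          ring
  rcases eq_or_lt_of_le hab with rfl | hab'
  · simp [hB]
  have hba : 0 < b - a := sub_pos.2 hab'
  have main : ∀ δ : ℝ, 0 < δ → B ^ 2 ≤ (A + δ) * (b - a) := by
    intro δ hδ
    set s : ℝ := Real.sqrt ((A + δ) * (b - a)) with hs
    have hspos : 0 < s := Real.sqrt_pos.2 (mul_pos (by linarith) hba)
    have hs2 : s ^ 2 = (A + δ) * (b - a) := Real.sq_sqrt (by positivity)
    have hkey := key (s / (b - a)) (div_pos hspos hba)
    have h1 : s / (b - a) * (b - a) = s := div_mul_cancel₀ _ hba.ne'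
    have h2 : A / (s / (b - a)) = A * (b - a) / s := by
      field_simp
    rw [h1, h2] at hkey
    have h3 : A * (b - a) / s ≤ s := by
      rw [div_le_iff₀ hspos]
      nlinarith
    have h4 : B ≤ s := by linarith
    nlinarith
  by_contra hcon
  push_neg at hcon
  have hδ : 0 < (B ^ 2 - A * (b - a)) / (b - a) / 2 := by
    have : 0 < B ^ 2 - A * (b - a) := by nlinarith
    positivity
  have := main _ hδ
  have hexp : ((B ^ 2 - A * (b - a)) / (b - a) / 2) * (b - a) = (B ^ 2 - A * (b - a)) / 2 := by
    field_simp
  nlinarith [this]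


/-- **Stable direction of Newcomb's criterion.** If the C² solution `u` of the
marginal-stability Euler–Lagrange equation with `u(r₁) = 0`, `u'(r₁) = 1` has no
further zero on `(r₁, r₂]`, then `W(r₁, r₂; ξ) ≥ 0` for every continuous, piecewise
continuously differentiable `ξ` vanishing at both endpoints. -/
theorem newcomb_stable_direction
    (r₁ r₂ : ℝ) (hr : r₁ < r₂) (f g : ℝ → ℝ)
    (hf : ContinuousOn f (Set.Icc r₁ r₂)) (hg : ContinuousOn g (Set.Icc r₁ r₂))
    (hfpos : ∀ r ∈ Set.Icc r₁ r₂, 0 < f r)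
    -- `u` is a C² solution of the Euler–Lagrange equation:
    (u u' u'' : ℝ → ℝ)
    (hu : SolvesEulerLagrange f g r₁ r₂ u u')
    (hu2 : ∀ r ∈ Set.Icc r₁ r₂, HasDerivAt u' (u'' r) r)
    (hu2c : ContinuousOn u'' (Set.Icc r₁ r₂))
    (hu1 : u r₁ = 0) (hu1' : u' r₁ = 1)
    -- the solution started from its zero at `r₁` has no further zero on the interval:
    (hnozero : ∀ r ∈ Set.Ioc r₁ r₂, u r ≠ 0) :
    ∀ ξ : ℝ → ℝ, PiecewiseC1On ξ r₁ r₂ → ξ r₁ = 0 → ξ r₂ = 0 →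
      0 ≤ energyW f g r₁ r₂ ξ := by
  intro ξ hξ hξ1 hξ2
  obtain ⟨hξc, S, hS⟩ := hξ
  set F : ℝ → ℝ := fun r => f r * (deriv ξ r) ^ 2 + g r * (ξ r) ^ 2 with hF
  have hmain : 0 ≤ ∫ r in r₁..r₂, F r := by
    by_cases hInt : IntervalIntegrable F volume r₁ r₂
    swap
    · rw [intervalIntegral.integral_undef hInt]
    -- continuity of u, u'
    have hucont : ContinuousOn u (Set.Icc r₁ r₂) :=
      fun r hrm => ((hu.1 r hrm).continuousAt).continuousWithinAt
    have hu'cont : ContinuousOn u' (Set.Icc r₁ r₂) :=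
      fun r hrm => ((hu2 r hrm).continuousAt).continuousWithinAt
    have hIcc : Set.uIcc r₁ r₂ = Set.Icc r₁ r₂ := Set.uIcc_of_le hr.le
    -- u is positive on (r₁, r₂]
    have hslope : Tendsto (fun x => u x / (x - r₁)) (𝓝[>] r₁) (𝓝 1) := by
      have h := hu.1 r₁ ⟨le_rfl, hr.le⟩
      rw [hasDerivAt_iff_tendsto_slope, hu1'] at h
      have h2 : Tendsto (slope u r₁) (𝓝[>] r₁) (𝓝 1) :=
        h.mono_left (nhdsWithin_mono _ fun x hx => ne_of_gt hx)
      refine h2.congr fun x => ?_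
      simp [slope_def_field, hu1]
    have hupos : ∀ r ∈ Set.Ioc r₁ r₂, 0 < u r := by
      intro r hrm
      rcases (hnozero r hrm).lt_or_gt with hneg | hpos
      swap
      · exact hpos
      exfalso
      have hev1 : ∀ᶠ x in 𝓝[>] r₁, 1/2 < u x / (x - r₁) :=
        hslope.eventually (eventually_gt_nhds (by norm_num))
      have hev2 : Set.Ioo r₁ r ∈ 𝓝[>] r₁ := Ioo_mem_nhdsGT hrm.1
      obtain ⟨x, hx1, hx2⟩ := (hev1.and (eventually_of_mem hev2 fun x hx => hx)).exists
      have hxpos : 0 < u x := by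
        by_contra hle
        push_neg at hle
        have h3 : u x / (x - r₁) ≤ 0 :=
          div_nonpos_of_nonpos_of_nonneg hle (by linarith [hx2.1])
        linarith
      have hcont : ContinuousOn u (Set.Icc x r) :=
        hucont.mono (Icc_subset_Icc hx2.1.le hrm.2)
      have h0m : (0:ℝ) ∈ Set.Icc (u r) (u x) := ⟨hneg.le, hxpos.le⟩
      obtain ⟨z, hz, hz0⟩ := intermediate_value_Icc' hx2.2.le hcont h0m
      exact hnozero z ⟨lt_of_lt_of_le hx2.1 hz.1, hz.2.trans hrm.2⟩ hz0
    -- integrability facts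
    have hgξ2 : IntervalIntegrable (fun r => g r * ξ r ^ 2) volume r₁ r₂ := by
      apply ContinuousOn.intervalIntegrable
      rw [hIcc]; exact hg.mul (hξc.pow 2)
    have hfd2 : IntervalIntegrable (fun r => f r * (deriv ξ r) ^ 2) volume r₁ r₂ := by
      simpa only [hF, add_sub_cancel_right] using hInt.sub hgξ2
    have hd2 : IntervalIntegrable (fun r => (deriv ξ r) ^ 2) volume r₁ r₂ := by
      have hfinv : ContinuousOn (fun r => (f r)⁻¹) (Set.Icc r₁ r₂) :=
        hf.inv₀ (fun x hx => (hfpos x hx).ne')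
      have h1 : IntervalIntegrable (fun x => (f x * (deriv ξ x) ^ 2) * (f x)⁻¹) volume r₁ r₂ :=
        hfd2.mul_continuousOn (by rw [hIcc]; exact hfinv)
      refine h1.mono_fun (((measurable_deriv ξ).pow_const 2).aestronglyMeasurable) ?_
      rw [Set.uIoc_of_le hr.le]
      filter_upwards [ae_restrict_mem measurableSet_Ioc] with x hx
      have hfx : f x ≠ 0 := (hfpos x ⟨hx.1.le, hx.2⟩).ne'
      have heq : f x * (deriv ξ x) ^ 2 * (f x)⁻¹ = (deriv ξ x) ^ 2 := by field_simp
      rw [heq]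
    have hd1 : IntervalIntegrable (deriv ξ) volume r₁ r₂ := by
      refine IntervalIntegrable.mono_fun' (g := fun x => 1 + (deriv ξ x) ^ 2)
        (intervalIntegrable_const.add hd2) ((measurable_deriv ξ).aestronglyMeasurable) ?_
      refine Eventually.of_forall fun x => ?_
      simp only [Real.norm_eq_abs]
      nlinarith [sq_abs (deriv ξ x), abs_nonneg (deriv ξ x), sq_nonneg (|deriv ξ x| - 1)]
    -- the comparison function φ
    set φ : ℝ → ℝ := fun r => f r * u' r * ξ r ^ 2 / u r with hφ
    set Avar : ℝ → ℝ := fun a => ∫ y in r₁..a, (deriv ξ y) ^ 2 with hAvar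
    set P : ℝ → ℝ := fun a => ∫ y in r₁..a, F y with hP
    -- key inequality
    have hkey : ∀ a ∈ Set.Ioo r₁ r₂, P a - φ a ≤ ∫ y in r₁..r₂, F y := by
      intro a ha
      have ha2 : a ≤ r₂ := ha.2.le
      have hsubu : Set.uIcc a r₂ ⊆ Set.uIcc r₁ r₂ := by
        rw [Set.uIcc_of_le ha2, hIcc]
        exact Icc_subset_Icc ha.1.le le_rfl
      have hsubl : Set.uIcc r₁ a ⊆ Set.uIcc r₁ r₂ := by
        rw [Set.uIcc_of_le ha.1.le, hIcc]
        exact Icc_subset_Icc le_rfl ha2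
      have hIccsub : Set.Icc a r₂ ⊆ Set.Icc r₁ r₂ := Icc_subset_Icc ha.1.le le_rfl
      have hIocsub : Set.Icc a r₂ ⊆ Set.Ioc r₁ r₂ := fun x hx => ⟨lt_of_lt_of_le ha.1 hx.1, hx.2⟩
      have hne : ∀ x ∈ Set.Icc a r₂, u x ≠ 0 := fun x hx => (hupos x (hIocsub hx)).ne'
      have hIntF2 : IntervalIntegrable F volume a r₂ := hInt.mono_set hsubu
      have hIntP : IntervalIntegrable F volume r₁ a := hInt.mono_set hsubl
      set G : ℝ → ℝ := fun r => f r * (deriv ξ r - u' r / u r * ξ r) ^ 2 with hG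
      have hcoef : ContinuousOn (fun r => 2 * (f r * (u' r / u r) * ξ r)) (Set.Icc a r₂) := by
        apply ContinuousOn.mul continuousOn_const
        exact ((hf.mono hIccsub).mul
          (((hu'cont.mono hIccsub).div (hucont.mono hIccsub) hne))).mul (hξc.mono hIccsub)
      have hmid : IntervalIntegrable
          (fun r => deriv ξ r * (2 * (f r * (u' r / u r) * ξ r))) volume a r₂ :=
        (hd1.mono_set hsubu).mul_continuousOn (by rw [Set.uIcc_of_le ha2]; exact hcoef)
      have hthird : IntervalIntegrable
          (fun r => f r * (u' r / u r) ^ 2 * ξ r ^ 2) volume a r₂ := by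
        apply ContinuousOn.intervalIntegrable
        rw [Set.uIcc_of_le ha2]
        exact ((hf.mono hIccsub).mul
          (((hu'cont.mono hIccsub).div (hucont.mono hIccsub) hne).pow 2)).mul
          ((hξc.mono hIccsub).pow 2)
      have hFG : IntervalIntegrable (fun r => F r - G r) volume a r₂ := by
        have heq : (fun r => F r - G r) =
            fun r => g r * ξ r ^ 2 + deriv ξ r * (2 * (f r * (u' r / u r) * ξ r))
              - f r * (u' r / u r) ^ 2 * ξ r ^ 2 := by
          funext r
          simp only [hF, hG]
          ring
        rw [heq]
        exact ((hgξ2.mono_set hsubu).add hmid).sub hthird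
      have hφcont : ContinuousOn φ (Set.Icc a r₂) := by
        rw [hφ]
        exact (((hf.mono hIccsub).mul (hu'cont.mono hIccsub)).mul
          ((hξc.mono hIccsub).pow 2)).div (hucont.mono hIccsub) hne
      have hφderiv : ∀ x ∈ Set.Ioo a r₂, x ∉ S → HasDerivAt φ (F x - G x) x := by
        intro x hx hxS
        have hxm : x ∈ Set.Icc r₁ r₂ := ⟨(ha.1.trans hx.1).le, hx.2.le⟩
        have hux : u x ≠ 0 := (hupos x ⟨ha.1.trans hx.1, hx.2.le⟩).ne'
        have hdξ : HasDerivAt ξ (deriv ξ x) x := ((hS x hxm hxS).1).hasDerivAt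
        have h1 : HasDerivAt (fun s => f s * u' s) (g x * u x) x := hu.2 x hxm
        have h3 : HasDerivAt u (u' x) x := hu.1 x hxm
        have hdiv := (hdξ.pow 2).div h3 hux
        have hmul := h1.mul hdiv
        have heqφ : φ = fun s => (f s * u' s) * (ξ s ^ 2 / u s) := by
          funext s
          simp only [hφ]
          ring
        rw [heqφ]
        have hmul' : HasDerivAt (fun s => (f s * u' s) * (ξ s ^ 2 / u s)) _ x := hmul
        convert hmul' using 1
        simp only [hF, hG, Pi.div_apply, Pi.pow_apply]
        field_simp
        ring
      have hftc : ∫ y in a..r₂, (F y - G y) = φ r₂ - φ a :=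
        ftc_finset φ (fun r => F r - G r) S a r₂ ha2 hφcont hφderiv hFG
      have hφr₂ : φ r₂ = 0 := by
        simp only [hφ]
        simp [hξ2]
      have hGint : IntervalIntegrable G volume a r₂ := by
        have h := hIntF2.sub hFG
        simpa only [sub_sub_cancel] using h
      have hGnn : 0 ≤ ∫ y in a..r₂, G y :=
        intervalIntegral.integral_nonneg ha2
          fun x hx => mul_nonneg (hfpos x (hIccsub hx)).le (sq_nonneg _)
      have hsplit : (∫ y in r₁..r₂, F y) = P a + ∫ y in a..r₂, F y :=
        (intervalIntegral.integral_add_adjacent_intervals hIntP hIntF2).symm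
      have hsub2 : (∫ y in a..r₂, F y)
          = (∫ y in a..r₂, (F y - G y)) + ∫ y in a..r₂, G y := by
        rw [intervalIntegral.integral_sub hIntF2 hGint]
        ring
      rw [hsplit, hsub2, hftc, hφr₂]
      linarith
    -- pointwise bound on ξ
    have hξbound : ∀ a ∈ Set.Ioo r₁ r₂, ξ a ^ 2 ≤ (a - r₁) * Avar a := by
      intro a ha
      have ha1 : r₁ ≤ a := ha.1.le
      have hsub : Set.uIcc r₁ a ⊆ Set.uIcc r₁ r₂ := by
        rw [Set.uIcc_of_le ha1, hIcc]
        exact Icc_subset_Icc le_rfl ha.2.le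
      have hd1a : IntervalIntegrable (deriv ξ) volume r₁ a := hd1.mono_set hsub
      have hd2a : IntervalIntegrable (fun x => (deriv ξ x) ^ 2) volume r₁ a := hd2.mono_set hsub
      have hxi : ξ a = ∫ y in r₁..a, deriv ξ y := by
        have h := ftc_finset ξ (deriv ξ) S r₁ a ha1 (hξc.mono (Icc_subset_Icc le_rfl ha.2.le))
          (fun x hx hxS => ((hS x ⟨hx.1.le, hx.2.le.trans ha.2.le⟩ hxS).1).hasDerivAt)
          hd1a
        rw [hξ1, sub_zero] at h
        exact h.symm
      have h1 : |ξ a| ≤ ∫ y in r₁..a, |deriv ξ y| := by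
        rw [hxi]
        exact intervalIntegral.abs_integral_le_integral_abs ha1
      have h2 := cs_interval (deriv ξ) r₁ a ha1 hd1a hd2a
      calc ξ a ^ 2 = |ξ a| ^ 2 := (sq_abs _).symm
        _ ≤ (∫ y in r₁..a, |deriv ξ y|) ^ 2 := by
            exact pow_le_pow_left₀ (abs_nonneg _) h1 2
        _ ≤ (a - r₁) * Avar a := h2
    -- limits
    set l : Filter ℝ := 𝓝[Set.Ioo r₁ r₂] r₁ with hl
    haveI hlne : l.NeBot := left_nhdsWithin_Ioo_neBot hr
    have hlle : l ≤ 𝓝[>] r₁ := nhdsWithin_mono _ (fun x hx => hx.1)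
    have hlleIcc : l ≤ 𝓝[Set.Icc r₁ r₂] r₁ := nhdsWithin_mono _ Set.Ioo_subset_Icc_self
    have hPl : Tendsto P l (𝓝 0) := by
      have hio : IntegrableOn F (Set.uIcc r₁ r₂) volume := by
        rw [hIcc]
        exact (intervalIntegrable_iff_integrableOn_Icc_of_le hr.le).1 hInt
      have hc := intervalIntegral.continuousOn_primitive_interval hio
      have hcw := hc r₁ (by rw [hIcc]; exact ⟨le_rfl, hr.le⟩)
      have h0 : (∫ t in r₁..r₁, F t) = 0 := intervalIntegral.integral_same
      rw [ContinuousWithinAt, h0, hIcc] at hcw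
      exact hcw.mono_left hlleIcc
    have hAl : Tendsto Avar l (𝓝 0) := by
      have hio : IntegrableOn (fun x => (deriv ξ x) ^ 2) (Set.uIcc r₁ r₂) volume := by
        rw [hIcc]
        exact (intervalIntegrable_iff_integrableOn_Icc_of_le hr.le).1 hd2
      have hc := intervalIntegral.continuousOn_primitive_interval hio
      have hcw := hc r₁ (by rw [hIcc]; exact ⟨le_rfl, hr.le⟩)
      have h0 : (∫ t in r₁..r₁, (deriv ξ t) ^ 2) = 0 := intervalIntegral.integral_same
      rw [ContinuousWithinAt, h0, hIcc] at hcw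
      exact hcw.mono_left hlleIcc
    have hfl : Tendsto f l (𝓝 (f r₁)) := (hf r₁ ⟨le_rfl, hr.le⟩).mono_left hlleIcc
    have hu'l : Tendsto u' l (𝓝 1) := by
      have := ((hu2 r₁ ⟨le_rfl, hr.le⟩).continuousAt).tendsto
      rw [hu1'] at this
      exact this.mono_left nhdsWithin_le_nhds
    have hinvslope : Tendsto (fun a => (a - r₁) / u a) l (𝓝 1) := by
      have h1 := (hslope.mono_left hlle).inv₀ one_ne_zero
      rw [inv_one] at h1
      refine h1.congr' ?_
      filter_upwards [self_mem_nhdsWithin] with a ha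
      rw [inv_div]
    set B : ℝ → ℝ := fun a => f a * u' a * ((a - r₁) / u a) * Avar a with hBdef
    have hBl : Tendsto B l (𝓝 0) := by
      have := ((hfl.mul hu'l).mul hinvslope).mul hAl
      simpa using this
    have hev : ∀ᶠ a in l, P a - B a ≤ ∫ y in r₁..r₂, F y := by
      filter_upwards [self_mem_nhdsWithin, hu'l.eventually (eventually_ge_nhds (by norm_num : (1:ℝ)/2 < 1))]
        with a ha hu'a
      have hua : 0 < u a := hupos a ⟨ha.1, ha.2.le⟩
      have hfa : 0 < f a := hfpos a ⟨ha.1.le, ha.2.le⟩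
      have hφB : φ a ≤ B a := by
        have h1 : ξ a ^ 2 ≤ (a - r₁) * Avar a := hξbound a ha
        have h2 : 0 ≤ f a * u' a / u a := div_nonneg (mul_nonneg hfa.le (by linarith)) hua.le
        calc φ a = (f a * u' a / u a) * ξ a ^ 2 := by rw [hφ]; ring
          _ ≤ (f a * u' a / u a) * ((a - r₁) * Avar a) := by
              exact mul_le_mul_of_nonneg_left h1 h2
          _ = B a := by rw [hBdef]; ring
      have := hkey a ha
      linarith
    have hlim : Tendsto (fun a => P a - B a) l (𝓝 0) := by
      simpa using hPl.sub hBl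
    exact le_of_tendsto hlim hev
  have hpi : (0:ℝ) ≤ Real.pi / 2 := by positivity
  exact mul_nonneg hpi hmain
end

section
/- Let u : ℝ → ℝ be C¹ with curvature 1/R_c(l) := u'(l), let R_s(l) = R₀ + ∫₀^l cos u(t) dt with R_s(l) > 0, and set R(ρ, l) = R_s(l) + ρ sin u(l). Let p, F : ℝ → ℝ be C¹ and suppose ψ : [0, ε) × ℝ → ℝ is C² and satisfies the Grad–Shafranov equation in Mercier–Luc coordinates, ( R/(1+ρ/R_c) ) [ ∂_l( ((1+ρ/R_c)/R) ∂_l ψ ) + ∂_ρ( ((1+ρ/R_c)/R) ∂_ρ ψ ) ] = −R² p'(ψ) − F(ψ) F'(ψ), with ψ(0, l) = ψ₀ constant in l and ∂_ρψ(0, l) = −R_s(l) B_{ps}(l) for a function B_{ps}. Then the second-order coefficient ψ₂(l) := (1/2) ∂²_ρ ψ(0, l) of the radial Taylor expansion ψ = ψ₀ + ρψ₁ + ρ²ψ₂ + O(ρ³) is given by ψ₂(l) = −(1/2) [ R_s B_{ps} ( sin u / R_s − 1/R_c ) + R_s² p'(ψ₀) + F(ψ₀) F'(ψ₀) ]. (Equation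 (C.9); units with μ₀ = 1.) -/
open Real Asymptotics


/-- **Second-order coefficient of the local Grad–Shafranov expansion (C.9).**
In Mercier–Luc coordinates `(ρ, l)`, if `ψ` is C² on `S = [0, ε) × ℝ` and
satisfies the Grad–Shafranov equation
`(R/(1+ρ/R_c)) [ ∂_l( ((1+ρ/R_c)/R) ∂_l ψ ) + ∂_ρ( ((1+ρ/R_c)/R) ∂_ρ ψ ) ]
  = −R² p'(ψ) − F(ψ) F'(ψ)`
with `ψ(0, l) = ψ₀` and `∂_ρψ(0, l) = −R_s B_{ps}`, then
`ψ₂(l) = (1/2) ∂²_ρψ(0, l)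
  = −(1/2)[ R_s B_{ps} (sin u / R_s − 1/R_c) + R_s² p'(ψ₀) + F(ψ₀) F'(ψ₀) ]`,
where `1/R_c = u'` (units with `μ₀ = 1`). -/
theorem grad_shafranov_second_order_coefficient
    (u : ℝ → ℝ) (hu : ContDiff ℝ 1 u)
    (R₀ : ℝ) (Rs : ℝ → ℝ)
    (hRs : Rs = fun l => R₀ + ∫ t in (0 : ℝ)..l, Real.cos (u t))
    (hRspos : ∀ l : ℝ, 0 < Rs l)
    (Rf : ℝ × ℝ → ℝ) (hRf : Rf = fun q => Rs q.2 + q.1 * Real.sin (u q.2))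
    (p F : ℝ → ℝ) (hp : ContDiff ℝ 1 p) (hF : ContDiff ℝ 1 F)
    (ε : ℝ) (hε : 0 < ε)
    (S : Set (ℝ × ℝ)) (hS : S = Set.Ico (0 : ℝ) ε ×ˢ (Set.univ : Set ℝ))
    (ψ : ℝ × ℝ → ℝ) (hψ : ContDiffOn ℝ 2 ψ S)
    -- the Grad–Shafranov equation in Mercier–Luc coordinates:
    (hGS : ∀ q ∈ S,
      (Rf q / (1 + q.1 * deriv u q.2)) *
        (fderivWithin ℝ
            (fun q' => ((1 + q'.1 * deriv u q'.2) / Rf q') *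
              fderivWithin ℝ ψ S q' (0, 1)) S q (0, 1) +
         fderivWithin ℝ
            (fun q' => ((1 + q'.1 * deriv u q'.2) / Rf q') *
              fderivWithin ℝ ψ S q' (1, 0)) S q (1, 0)) =
        -(Rf q) ^ 2 * deriv p (ψ q) - F (ψ q) * deriv F (ψ q))
    -- on-surface data: `ψ(0, l) = ψ₀` and `∂_ρψ(0, l) = −R_s B_{ps}`:
    (ψ₀ : ℝ) (hψ0 : ∀ l : ℝ, ψ (0, l) = ψ₀)
    (Bps : ℝ → ℝ) (hBpspos : ∀ l : ℝ, 0 < Bps l)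
    (hψ1 : ∀ l : ℝ, fderivWithin ℝ ψ S (0, l) (1, 0) = -(Rs l * Bps l)) :
    ∀ l : ℝ,
      (1 / 2) * fderivWithin ℝ (fun q => fderivWithin ℝ ψ S q (1, 0)) S (0, l) (1, 0) =
        -(1 / 2) * (Rs l * Bps l * (Real.sin (u l) / Rs l - deriv u l) +
          (Rs l) ^ 2 * deriv p ψ₀ + F ψ₀ * deriv F ψ₀) := by
  intro l
  -- basic set facts
  have hmem : ∀ l' : ℝ, ((0 : ℝ), l') ∈ S := by
    intro l'; rw [hS]; exact ⟨⟨le_refl 0, hε⟩, trivial⟩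
  have hUD : UniqueDiffOn ℝ S := by
    rw [hS]
    refine uniqueDiffOn_convex ((convex_Ico (0:ℝ) ε).prod convex_univ) ?_
    rw [interior_prod_eq, interior_Ico, interior_univ]
    exact ⟨(ε/2, 0), ⟨by positivity, by linarith⟩, trivial⟩
  -- the "line lemma"
  have hline : ∀ (g : ℝ × ℝ → ℝ) (l₀ : ℝ), DifferentiableWithinAt ℝ g S (0, l₀) →
      (∀ l', g (0, l') = g (0, l₀)) → fderivWithin ℝ g S (0, l₀) (0, 1) = 0 := by
    intro g l₀ hg hconst
    have hφ : HasDerivAt (fun t : ℝ => ((0 : ℝ), t)) ((0 : ℝ), (1 : ℝ)) l₀ :=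
      (hasDerivAt_const l₀ (0 : ℝ)).prodMk (hasDerivAt_id l₀)
    have hmaps : Set.MapsTo (fun t : ℝ => ((0 : ℝ), t)) Set.univ S :=
      fun t _ => hmem t
    have hcomp : HasDerivWithinAt (g ∘ fun t : ℝ => ((0 : ℝ), t))
        (fderivWithin ℝ g S (0, l₀) (0, 1)) Set.univ l₀ :=
      HasFDerivWithinAt.comp_hasDerivWithinAt l₀ hg.hasFDerivWithinAt hφ.hasDerivWithinAt hmaps
    rw [hasDerivWithinAt_univ] at hcomp
    have hconstfun : (g ∘ fun t : ℝ => ((0 : ℝ), t)) = fun _ => g (0, l₀) :=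
      funext fun t => hconst t
    rw [hconstfun] at hcomp
    exact hcomp.unique (hasDerivAt_const _ _)
  -- ψ is differentiable within S
  have hψd : ∀ l' : ℝ, DifferentiableWithinAt ℝ ψ S (0, l') := fun l' =>
    (hψ.differentiableOn (by norm_num)) _ (hmem l')
  -- ∂_l ψ = 0 on the surface
  have h1zero : ∀ l' : ℝ, fderivWithin ℝ ψ S (0, l') (0, 1) = 0 := by
    intro l'
    exact hline ψ l' (hψd l') (fun l'' => by rw [hψ0, hψ0])
  -- the A-term vanishes
  have hA : fderivWithin ℝ
      (fun q' => ((1 + q'.1 * deriv u q'.2) / Rf q') *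
        fderivWithin ℝ ψ S q' (0, 1)) S (0, l) (0, 1) = 0 := by
    by_cases hd : DifferentiableWithinAt ℝ
        (fun q' => ((1 + q'.1 * deriv u q'.2) / Rf q') *
          fderivWithin ℝ ψ S q' (0, 1)) S (0, l)
    · exact hline _ l hd (fun l' => by rw [h1zero, h1zero]; ring)
    · rw [fderivWithin_zero_of_not_differentiableWithinAt hd]; rfl
  -- derivatives of the geometric data
  have hv : Continuous (deriv u) := hu.continuous_deriv le_rfl
  have hRsd : ∀ l' : ℝ, HasDerivAt Rs (Real.cos (u l')) l' := by
    intro l'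
    rw [hRs]
    have hcont : Continuous fun t => Real.cos (u t) := Real.continuous_cos.comp hu.continuous
    exact ((intervalIntegral.integral_hasDerivAt_right
      (hcont.intervalIntegrable _ _)
      (hcont.stronglyMeasurableAtFilter _ _)
      hcont.continuousAt)).const_add R₀
  have hRf0 : Rf (0, l) = Rs l := by rw [hRf]; simp
  have hRsne : Rs l ≠ 0 := ne_of_gt (hRspos l)
  -- derivative of q ↦ 1 + q.1 * deriv u q.2 at (0,l)
  have hn : HasFDerivAt (fun q : ℝ × ℝ => 1 + q.1 * deriv u q.2)
      (deriv u l • ContinuousLinearMap.fst ℝ ℝ ℝ) (0, l) := by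
    have hcore : HasFDerivAt (fun q : ℝ × ℝ => q.1 * deriv u q.2)
        (deriv u l • ContinuousLinearMap.fst ℝ ℝ ℝ) (0, l) := by
      rw [hasFDerivAt_iff_isLittleO_nhds_zero]
      have key : (fun h : ℝ × ℝ => h.1 * (deriv u (l + h.2) - deriv u l))
          =o[nhds 0] fun h : ℝ × ℝ => h := by
        have h1 : (fun h : ℝ × ℝ => h.1) =O[nhds (0 : ℝ × ℝ)] fun h : ℝ × ℝ => ‖h‖ := by
          refine IsBigO.of_bound 1 (Filter.Eventually.of_forall fun h => ?_)
          simp only [norm_norm, one_mul]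
          exact norm_fst_le h
        have h2 : (fun h : ℝ × ℝ => deriv u (l + h.2) - deriv u l)
            =o[nhds (0 : ℝ × ℝ)] fun _ => (1 : ℝ) := by
          rw [isLittleO_one_iff]
          have : Filter.Tendsto (fun h : ℝ × ℝ => l + h.2) (nhds 0) (nhds l) := by
            have := (Continuous.tendsto (f := fun h : ℝ × ℝ => l + h.2)
              (continuous_const.add continuous_snd) (0 : ℝ × ℝ))
            simpa using this
          have := ((hv.tendsto l).comp this).sub_const (deriv u l)
          simpa using this
        have := h1.mul_isLittleO h2
        simp only [mul_one] at this
        exact this.of_norm_right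
      refine key.congr_left fun h => ?_
      simp only [Prod.fst_add, Prod.snd_add, ContinuousLinearMap.smul_apply,
        ContinuousLinearMap.coe_fst', Prod.fst_zero, Prod.snd_zero, zero_add,
        smul_eq_mul]
      ring
    exact hcore.const_add 1
  -- derivative of Rf at (0,l)
  have hRsnd : HasFDerivAt (fun q : ℝ × ℝ => Rs q.2)
      (Real.cos (u l) • ContinuousLinearMap.snd ℝ ℝ ℝ) (0, l) :=
    (hRsd l).comp_hasFDerivAt _ hasFDerivAt_snd
  have hsinu : HasDerivAt (fun x => Real.sin (u x)) (Real.cos (u l) * deriv u l) l := by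
    have hu' : HasDerivAt u (deriv u l) l := ((hu.differentiable one_ne_zero) l).hasDerivAt
    exact (Real.hasDerivAt_sin (u l)).comp l hu'
  have hsn : HasFDerivAt (fun q : ℝ × ℝ => Real.sin (u q.2))
      ((Real.cos (u l) * deriv u l) • ContinuousLinearMap.snd ℝ ℝ ℝ) (0, l) :=
    (hsinu.comp_hasFDerivAt ((0:ℝ), l) (hasFDerivAt_snd (𝕜 := ℝ) (E := ℝ) (F := ℝ) (p := ((0:ℝ), l))) :)
  have hmul2 := (hasFDerivAt_fst (p := ((0:ℝ), l))).mul hsn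
  have hRfD : HasFDerivAt Rf
      (Real.cos (u l) • ContinuousLinearMap.snd ℝ ℝ ℝ +
        (((0:ℝ), l).1 • ((Real.cos (u l) * deriv u l) • ContinuousLinearMap.snd ℝ ℝ ℝ) +
          Real.sin (u ((0:ℝ), l).2) • ContinuousLinearMap.fst ℝ ℝ ℝ)) (0, l) := by
    rw [hRf]
    exact hRsnd.add hmul2
  have hne : Rf (0, l) ≠ 0 := by rw [hRf0]; exact hRsne
  have hinv := (hasDerivAt_inv hne).comp_hasFDerivAt ((0:ℝ), l) hRfD
  have hmulc := hn.mul hinv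
  have hcW : HasFDerivWithinAt (fun q' : ℝ × ℝ => (1 + q'.1 * deriv u q'.2) / Rf q')
      ((1 + ((0:ℝ), l).1 * deriv u ((0:ℝ), l).2) •
          ((-(Rf (0, l) ^ 2)⁻¹) •
            (Real.cos (u l) • ContinuousLinearMap.snd ℝ ℝ ℝ +
              (((0:ℝ), l).1 • ((Real.cos (u l) * deriv u l) • ContinuousLinearMap.snd ℝ ℝ ℝ) +
                Real.sin (u ((0:ℝ), l).2) • ContinuousLinearMap.fst ℝ ℝ ℝ))) +
        (Rf ((0:ℝ), l))⁻¹ • (deriv u l • ContinuousLinearMap.fst ℝ ℝ ℝ)) S (0, l) := by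
    simp only [div_eq_mul_inv]
    exact hmulc.hasFDerivWithinAt
  -- second radial derivative term
  have hgop : ContDiffOn ℝ 1 (fderivWithin ℝ ψ S) S := hψ.fderivWithin hUD (by norm_num)
  have hg2 : DifferentiableWithinAt ℝ (fun q => fderivWithin ℝ ψ S q (1, 0)) S (0, l) :=
    ((hgop _ (hmem l)).differentiableWithinAt one_ne_zero).clm_apply (differentiableWithinAt_const _)
  have hprod := hcW.mul hg2.hasFDerivWithinAt
  have hBval := hprod.fderivWithin (hUD _ (hmem l))
  have hGSl := hGS (0, l) (hmem l)
  rw [hA, show (fun q' : ℝ × ℝ => ((1 + q'.1 * deriv u q'.2) / Rf q') * fderivWithin ℝ ψ S q' (1, 0)) = ((fun q' : ℝ × ℝ => (1 + q'.1 * deriv u q'.2) / Rf q') * fun q => fderivWithin ℝ ψ S q (1, 0)) from rfl, hBval] at hGSl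
  set X := fderivWithin ℝ (fun q => fderivWithin ℝ ψ S q (1, 0)) S (0, l) (1, 0) with hX
  simp only [ContinuousLinearMap.add_apply, ContinuousLinearMap.smul_apply,
    ContinuousLinearMap.coe_fst', ContinuousLinearMap.coe_snd', smul_eq_mul,
    hψ0, hψ1, hRf0, zero_add, add_zero, mul_zero, zero_mul, mul_one] at hGSl

  field_simp at hGSl
  have hbig : X * (Rs l * (Rs l ^ 2 * Rs l)) =
      (Rs l * Bps l * deriv u l - Bps l * Real.sin (u l) - Rs l ^ 2 * deriv p ψ₀ -
        F ψ₀ * deriv F ψ₀) * (Rs l * (Rs l ^ 2 * Rs l)) := by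
    linear_combination (Rs l * (Rs l ^ 2 * Rs l)) * hGSl
  have hX' : X = Rs l * Bps l * deriv u l - Bps l * Real.sin (u l) -
      Rs l ^ 2 * deriv p ψ₀ - F ψ₀ * deriv F ψ₀ := by
    refine mul_right_cancel₀ ?_ hbig
    have := hRspos l
    positivity
  rw [hX']
  field_simp
  ring
end

section
/- Under the hypotheses of the local Grad–Shafranov expansion (u C¹ with 1/R_c = u', R_s(l) > 0, R(ρ,l) = R_s + ρ sin u, ψ C² satisfying the Grad–Shafranov equation in Mercier–Luc coordinates with ψ(0,l) = ψ₀ and ∂_ρψ(0,l) = −R_s B_{ps}), define the field strength B(ρ, l) by B² = F(ψ)²/R² + ( (1/R) ∂_ρψ )², and set B_s(l) := √( F(ψ₀)²/R_s² + B_{ps}² ) (so B(0,l) = B_s). If B_s(l) > 0, then the radial gradient of the field strength on the surface is ∂_ρ B(0, l) = (1/B_s) ( −B_{ps}²/R_c + R_s B_{ps} p'(ψ₀) − F(ψ₀)² sin u / R_s³ ). (Equation (C.16); units with μ₀ = 1.) -/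
set_option maxHeartbeats 2000000


/-- **On-surface radial gradient of the field strength (C.16).**
In Mercier–Luc coordinates `(ρ, l)`, with `ψ` a C² solution of the Grad–Shafranov
equation on `S = [0, ε) × ℝ` with `ψ(0, l) = ψ₀`, `∂_ρψ(0, l) = −R_s B_{ps}`, and
the field strength defined by `B² = F(ψ)²/R² + ((1/R)∂_ρψ)²` with on-surface value
`B_s = √(F(ψ₀)²/R_s² + B_{ps}²) > 0`, the radial gradient of `B` on the surface is
`∂_ρB(0, l) = (1/B_s)( −B_{ps}²/R_c + R_s B_{ps} p'(ψ₀) − F(ψ₀)² sin u / R_s³ )`,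
where `1/R_c = u'` (units with `μ₀ = 1`). -/
theorem field_strength_radial_gradient
    (u : ℝ → ℝ) (hu : ContDiff ℝ 1 u)
    (R₀ : ℝ) (Rs : ℝ → ℝ)
    (hRs : Rs = fun l => R₀ + ∫ t in (0 : ℝ)..l, Real.cos (u t))
    (hRspos : ∀ l : ℝ, 0 < Rs l)
    (Rf : ℝ × ℝ → ℝ) (hRf : Rf = fun q => Rs q.2 + q.1 * Real.sin (u q.2))
    (p F : ℝ → ℝ) (hp : ContDiff ℝ 1 p) (hF : ContDiff ℝ 1 F)
    (ε : ℝ) (hε : 0 < ε)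
    (S : Set (ℝ × ℝ)) (hS : S = Set.Ico (0 : ℝ) ε ×ˢ (Set.univ : Set ℝ))
    (ψ : ℝ × ℝ → ℝ) (hψ : ContDiffOn ℝ 2 ψ S)
    -- the Grad–Shafranov equation in Mercier–Luc coordinates:
    (hGS : ∀ q ∈ S,
      (Rf q / (1 + q.1 * deriv u q.2)) *
        (fderivWithin ℝ
            (fun q' => ((1 + q'.1 * deriv u q'.2) / Rf q') *
              fderivWithin ℝ ψ S q' (0, 1)) S q (0, 1) +
         fderivWithin ℝ
            (fun q' => ((1 + q'.1 * deriv u q'.2) / Rf q') *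
              fderivWithin ℝ ψ S q' (1, 0)) S q (1, 0)) =
        -(Rf q) ^ 2 * deriv p (ψ q) - F (ψ q) * deriv F (ψ q))
    -- on-surface data: `ψ(0, l) = ψ₀` and `∂_ρψ(0, l) = −R_s B_{ps}`:
    (ψ₀ : ℝ) (hψ0 : ∀ l : ℝ, ψ (0, l) = ψ₀)
    (Bps : ℝ → ℝ) (hBpspos : ∀ l : ℝ, 0 < Bps l)
    (hψ1 : ∀ l : ℝ, fderivWithin ℝ ψ S (0, l) (1, 0) = -(Rs l * Bps l))
    -- the field strength `B` with `B² = F(ψ)²/R² + ((1/R) ∂_ρψ)²`, and its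
    -- on-surface value `B_s`:
    (Bfield : ℝ × ℝ → ℝ)
    (hBfield : Bfield = fun q =>
      Real.sqrt (F (ψ q) ^ 2 / (Rf q) ^ 2 + (fderivWithin ℝ ψ S q (1, 0) / Rf q) ^ 2))
    (Bs : ℝ → ℝ)
    (hBs : Bs = fun l => Real.sqrt (F ψ₀ ^ 2 / (Rs l) ^ 2 + (Bps l) ^ 2))
    (hBspos : ∀ l : ℝ, 0 < Bs l) :
    ∀ l : ℝ,
      fderivWithin ℝ Bfield S (0, l) (1, 0) =
        (1 / Bs l) * (-(Bps l) ^ 2 * deriv u l + Rs l * Bps l * deriv p ψ₀ -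
          F ψ₀ ^ 2 * Real.sin (u l) / (Rs l) ^ 3) := by
  have hvS : ∀ t : ℝ, ((0:ℝ), t) ∈ S := by
    intro t; rw [hS]; exact ⟨⟨le_refl 0, hε⟩, Set.mem_univ t⟩
  have hSuniq : UniqueDiffOn ℝ S := by
    rw [hS]; exact (uniqueDiffOn_Ico 0 ε).prod uniqueDiffOn_univ
  have hψd : DifferentiableOn ℝ ψ S := hψ.differentiableOn (by norm_num)
  -- the tangential derivative of ψ vanishes on the surface
  have hLl : ∀ t : ℝ, fderivWithin ℝ ψ S (0, t) ((0:ℝ), (1:ℝ)) = 0 := by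
    intro t
    have hL : HasFDerivWithinAt ψ (fderivWithin ℝ ψ S (0, t)) S (0, t) :=
      (hψd (0, t) (hvS t)).hasFDerivWithinAt
    have hγ : HasDerivAt (fun s : ℝ => ((0:ℝ), s)) ((0:ℝ), (1:ℝ)) t :=
      (hasDerivAt_const t (0:ℝ)).prodMk (hasDerivAt_id t)
    have hcomp : HasDerivAt (fun s : ℝ => ψ (0, s))
        (fderivWithin ℝ ψ S (0, t) ((0:ℝ), (1:ℝ))) t := by
      have := hL.comp_hasDerivWithinAt t (hγ.hasDerivWithinAt (s := Set.univ))
        (fun s _ => hvS s)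
      rwa [hasDerivWithinAt_univ] at this
    have hconst : HasDerivAt (fun s : ℝ => ψ (0, s)) 0 t := by
      have he : (fun s : ℝ => ψ (0, s)) = fun _ => ψ₀ := funext hψ0
      rw [he]; exact hasDerivAt_const t ψ₀
    exact hcomp.unique hconst
  intro l
  have hq₀S : ((0:ℝ), l) ∈ S := hvS l
  have hUq : UniqueDiffWithinAt ℝ S ((0:ℝ), l) := hSuniq _ hq₀S
  set a := Rs l with hadef
  set b := Bps l with hbdef
  set k := deriv u l with hkdef
  set sn := Real.sin (u l) with hsndef
  set cs := Real.cos (u l) with hcsdef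
  have ha0 : a ≠ 0 := (hRspos l).ne'
  have hψval : ψ ((0:ℝ), l) = ψ₀ := hψ0 l
  -- first derivative of ψ at the base point
  set L : (ℝ × ℝ) →L[ℝ] ℝ := fderivWithin ℝ ψ S ((0:ℝ), l) with hLdef
  have hL : HasFDerivWithinAt ψ L S ((0:ℝ), l) := (hψd _ hq₀S).hasFDerivWithinAt
  have hLv : L ((1:ℝ), (0:ℝ)) = -(a * b) := hψ1 l
  have hLw : L ((0:ℝ), (1:ℝ)) = 0 := hLl l
  -- second derivative data
  have hψ' : ContDiffOn ℝ 1 (fun q => fderivWithin ℝ ψ S q) S :=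
    hψ.fderivWithin hSuniq (by norm_num)
  have hΦd : DifferentiableWithinAt ℝ (fun q => fderivWithin ℝ ψ S q) S ((0:ℝ), l) :=
    (hψ'.differentiableOn one_ne_zero) _ hq₀S
  set Φ := fderivWithin ℝ (fun q => fderivWithin ℝ ψ S q) S ((0:ℝ), l) with hΦdef
  have hΦ : HasFDerivWithinAt (fun q => fderivWithin ℝ ψ S q) Φ S ((0:ℝ), l) :=
    hΦd.hasFDerivWithinAt
  have hψe : ∀ e : ℝ × ℝ, HasFDerivWithinAt (fun q => fderivWithin ℝ ψ S q e)
      ((ContinuousLinearMap.apply ℝ ℝ e).comp Φ) S ((0:ℝ), l) := fun e =>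
    (ContinuousLinearMap.apply ℝ ℝ e).hasFDerivAt.comp_hasFDerivWithinAt _ hΦ
  have hΦww : Φ ((0:ℝ), (1:ℝ)) ((0:ℝ), (1:ℝ)) = 0 := by
    have hγ : HasDerivAt (fun s : ℝ => ((0:ℝ), s)) ((0:ℝ), (1:ℝ)) l :=
      (hasDerivAt_const l (0:ℝ)).prodMk (hasDerivAt_id l)
    have hcomp : HasDerivAt (fun s : ℝ => fderivWithin ℝ ψ S (0, s) ((0:ℝ), (1:ℝ)))
        (((ContinuousLinearMap.apply ℝ ℝ ((0:ℝ), (1:ℝ))).comp Φ) ((0:ℝ), (1:ℝ))) l := by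
      have := (hψe ((0:ℝ), (1:ℝ))).comp_hasDerivWithinAt l
        (hγ.hasDerivWithinAt (s := Set.univ)) (fun s _ => hvS s)
      rwa [hasDerivWithinAt_univ] at this
    have hconst : HasDerivAt (fun s : ℝ => fderivWithin ℝ ψ S (0, s) ((0:ℝ), (1:ℝ))) 0 l := by
      have he : (fun s : ℝ => fderivWithin ℝ ψ S (0, s) ((0:ℝ), (1:ℝ))) = fun _ => 0 :=
        funext hLl
      rw [he]; exact hasDerivAt_const l 0
    have := hcomp.unique hconst
    simpa using this
  -- derivative of Rf
  have hucont : Continuous u := hu.continuous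
  have hRsD : HasDerivAt Rs cs l := by
    have hcc : Continuous fun t : ℝ => Real.cos (u t) := Real.continuous_cos.comp hucont
    have h1 : HasDerivAt (fun x : ℝ => ∫ t in (0:ℝ)..x, Real.cos (u t)) (Real.cos (u l)) l :=
      intervalIntegral.integral_hasDerivAt_right (hcc.intervalIntegrable 0 l)
        (hcc.stronglyMeasurableAtFilter _ _) hcc.continuousAt
    rw [hRs]; exact h1.const_add R₀
  have hsinD : HasDerivAt (fun t => Real.sin (u t)) (cs * k) l :=
    ((hu.differentiable one_ne_zero) l).hasDerivAt.sin
  have hRf1 : HasFDerivAt (fun q : ℝ × ℝ => Rs q.2) (cs • ContinuousLinearMap.snd ℝ ℝ ℝ)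
      ((0:ℝ), l) := hRsD.comp_hasFDerivAt _ hasFDerivAt_snd
  have hsin2 : HasFDerivAt (fun q : ℝ × ℝ => Real.sin (u q.2))
      ((cs * k) • ContinuousLinearMap.snd ℝ ℝ ℝ) ((0:ℝ), l) :=
    by have := hsinD.comp_hasFDerivAt ((0:ℝ), l) (hasFDerivAt_snd (𝕜 := ℝ) (E := ℝ) (F := ℝ) (p := ((0:ℝ), l))); exact this
  have hRfD : HasFDerivAt Rf
      (sn • ContinuousLinearMap.fst ℝ ℝ ℝ + cs • ContinuousLinearMap.snd ℝ ℝ ℝ) ((0:ℝ), l) := by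
    rw [hRf]
    have h3 := hasFDerivAt_fst.mul hsin2
    have h4 := hRf1.add h3
    refine h4.congr_fderiv ?_
    refine ContinuousLinearMap.ext fun x => ?_
    simp
    ring
  have hRfq₀ : Rf ((0:ℝ), l) = a := by rw [hRf]; simp; rfl
  have hRfne : Rf ((0:ℝ), l) ≠ 0 := by rw [hRfq₀]; exact ha0
  -- derivative of the numerator 1 + ρ u'
  have hND : HasFDerivAt (fun q : ℝ × ℝ => 1 + q.1 * deriv u q.2)
      (k • ContinuousLinearMap.fst ℝ ℝ ℝ) ((0:ℝ), l) := by
    rw [hasFDerivAt_iff_isLittleO_nhds_zero]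
    have heq : (fun h : ℝ × ℝ =>
        (1 + (((0:ℝ), l) + h).1 * deriv u (((0:ℝ), l) + h).2) -
          (1 + ((0:ℝ), l).1 * deriv u ((0:ℝ), l).2) -
          (k • ContinuousLinearMap.fst ℝ ℝ ℝ) h)
        = fun h : ℝ × ℝ => h.1 * (deriv u (l + h.2) - k) := by
      funext h
      simp
      ring
    rw [heq, Asymptotics.isLittleO_iff]
    intro c hc
    have hu'cont : Continuous (deriv u) := hu.continuous_deriv le_rfl
    have htend : Filter.Tendsto (fun h : ℝ × ℝ => deriv u (l + h.2) - k) (nhds 0) (nhds 0) := by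
      have hcont : Continuous fun h : ℝ × ℝ => deriv u (l + h.2) - k :=
        (hu'cont.comp (continuous_const.add continuous_snd)).sub continuous_const
      have := hcont.tendsto 0
      simpa [hkdef] using this
    filter_upwards [htend.eventually (eventually_abs_sub_lt 0 hc)] with h hh
    have h1 : |h.1| ≤ ‖h‖ := by simpa using norm_fst_le h
    have h2 : |deriv u (l + h.2) - k| ≤ c := by
      have := hh; rw [sub_zero] at this; exact this.le
    calc ‖h.1 * (deriv u (l + h.2) - k)‖ = |h.1| * |deriv u (l + h.2) - k| := by
          rw [Real.norm_eq_abs, abs_mul]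
      _ ≤ ‖h‖ * c := mul_le_mul h1 h2 (abs_nonneg _) (norm_nonneg _)
      _ = c * ‖h‖ := mul_comm _ _
  -- inverse of Rf
  have hRfinv : HasFDerivWithinAt (fun q => (Rf q)⁻¹)
      ((-(Rf ((0:ℝ), l) ^ 2)⁻¹) •
        (sn • ContinuousLinearMap.fst ℝ ℝ ℝ + cs • ContinuousLinearMap.snd ℝ ℝ ℝ)) S ((0:ℝ), l) :=
    (hasDerivAt_inv hRfne).comp_hasFDerivWithinAt _ hRfD.hasFDerivWithinAt
  -- directional derivative functions of ψ
  have hψρ : HasFDerivWithinAt (fun q => fderivWithin ℝ ψ S q ((1:ℝ), (0:ℝ)))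
      ((ContinuousLinearMap.apply ℝ ℝ ((1:ℝ), (0:ℝ))).comp Φ) S ((0:ℝ), l) := hψe _
  have hψl : HasFDerivWithinAt (fun q => fderivWithin ℝ ψ S q ((0:ℝ), (1:ℝ)))
      ((ContinuousLinearMap.apply ℝ ℝ ((0:ℝ), (1:ℝ))).comp Φ) S ((0:ℝ), l) := hψe _
  -- the Grad-Shafranov equation at the base point
  have hGSq := hGS _ hq₀S
  simp only [div_eq_mul_inv] at hGSq
  have hcN := hND.hasFDerivWithinAt.mul hRfinv
  have hTl := (hcN.mul hψl).fderivWithin hUq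
  have hTρ := (hcN.mul hψρ).fderivWithin hUq
  simp only [Pi.mul_def] at hTl hTρ
  rw [hTl, hTρ] at hGSq
  simp only [ContinuousLinearMap.add_apply, ContinuousLinearMap.smul_apply,
    ContinuousLinearMap.comp_apply, ContinuousLinearMap.apply_apply,
    ContinuousLinearMap.coe_smul', Pi.smul_apply, smul_eq_mul,
    ContinuousLinearMap.coe_fst', ContinuousLinearMap.coe_snd', hRfq₀, hψval] at hGSq
  rw [hLv, hLw, hΦww] at hGSq
  have hX : (Φ ((1:ℝ), (0:ℝ))) ((1:ℝ), (0:ℝ))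
      = a * b * k - sn * b - a ^ 2 * deriv p ψ₀ - F ψ₀ * deriv F ψ₀ := by
    have h4 : (Φ ((1:ℝ), (0:ℝ))) ((1:ℝ), (0:ℝ)) * (a * (a ^ 2 * a))
        = (a * b * k - sn * b - a ^ 2 * deriv p ψ₀ - F ψ₀ * deriv F ψ₀) * (a * (a ^ 2 * a)) := by
      linear_combination (a * (a ^ 2 * a)) * hGSq - (a * (a ^ 2 * a)) *
        ((Φ ((1:ℝ), (0:ℝ))) ((1:ℝ), (0:ℝ)) + b * sn * (1 + a * a⁻¹) - a * b * k) * (mul_inv_cancel₀ ha0)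
    exact mul_right_cancel₀ (by positivity) h4
  -- build the derivative of the field strength
  have hFder : HasDerivAt F (deriv F (ψ ((0:ℝ), l))) (ψ ((0:ℝ), l)) :=
    ((hF.differentiable one_ne_zero) (ψ ((0:ℝ), l))).hasDerivAt
  have hFψD : HasFDerivWithinAt (fun q => F (ψ q)) (deriv F (ψ ((0:ℝ), l)) • L) S ((0:ℝ), l) :=
    hFder.comp_hasFDerivWithinAt _ hL
  have hsq := (hasDerivAt_pow 2 (F (ψ ((0:ℝ), l)))).comp_hasFDerivWithinAt ((0:ℝ), l) hFψD
  have hRfpow := (hasDerivAt_pow 2 (Rf ((0:ℝ), l))).comp_hasFDerivWithinAt ((0:ℝ), l)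
    (hRfD.hasFDerivWithinAt (s := S))
  have hRfpowne : Rf ((0:ℝ), l) ^ 2 ≠ 0 := pow_ne_zero 2 hRfne
  have hRfpowinv := (hasDerivAt_inv hRfpowne).comp_hasFDerivWithinAt ((0:ℝ), l) hRfpow
  have hA1 := hsq.mul hRfpowinv
  have hA2a := hψρ.mul hRfinv
  have hA2 := (hasDerivAt_pow 2
    (fderivWithin ℝ ψ S ((0:ℝ), l) ((1:ℝ), (0:ℝ)) * (Rf ((0:ℝ), l))⁻¹)).comp_hasFDerivWithinAt
    ((0:ℝ), l) hA2a
  have hGfun := hA1.add hA2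
  have hGval : F (ψ ((0:ℝ), l)) ^ 2 * ((Rf ((0:ℝ), l)) ^ 2)⁻¹ +
      (fderivWithin ℝ ψ S ((0:ℝ), l) ((1:ℝ), (0:ℝ)) * (Rf ((0:ℝ), l))⁻¹) ^ 2 = Bs l ^ 2 := by
    rw [hψval, ← hLdef, hLv, hRfq₀, hBs]
    rw [Real.sq_sqrt (by positivity)]
    rw [← hadef, ← hbdef]
    field_simp
  have hGne : F (ψ ((0:ℝ), l)) ^ 2 * ((Rf ((0:ℝ), l)) ^ 2)⁻¹ +
      (fderivWithin ℝ ψ S ((0:ℝ), l) ((1:ℝ), (0:ℝ)) * (Rf ((0:ℝ), l))⁻¹) ^ 2 ≠ 0 := by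
    rw [hGval]; exact pow_ne_zero 2 (hBspos l).ne'
  have hBD := hGfun.sqrt hGne
  have hBfun : Bfield = fun q => Real.sqrt (F (ψ q) ^ 2 * ((Rf q) ^ 2)⁻¹ +
      (fderivWithin ℝ ψ S q ((1:ℝ), (0:ℝ)) * (Rf q)⁻¹) ^ 2) := by
    rw [hBfield]; funext q'; rw [div_eq_mul_inv, div_eq_mul_inv]
  simp only [Function.comp_def, Pi.mul_def, Pi.add_def] at hBD
  rw [hBfun]
  rw [hBD.fderivWithin hUq]
  have hsqrtval : Real.sqrt (F (ψ ((0:ℝ), l)) ^ 2 * ((Rf ((0:ℝ), l)) ^ 2)⁻¹ +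
      (fderivWithin ℝ ψ S ((0:ℝ), l) ((1:ℝ), (0:ℝ)) * (Rf ((0:ℝ), l))⁻¹) ^ 2) = Bs l := by
    rw [hGval, Real.sqrt_sq (hBspos l).le]
  simp only [ContinuousLinearMap.add_apply, ContinuousLinearMap.smul_apply,
    ContinuousLinearMap.comp_apply, ContinuousLinearMap.apply_apply,
    ContinuousLinearMap.coe_smul', Pi.smul_apply, smul_eq_mul,
    ContinuousLinearMap.coe_fst', ContinuousLinearMap.coe_snd']
  rw [hsqrtval, hψval, hRfq₀, ← hLdef, hLv, hX]
  have hBsne : Bs l ≠ 0 := (hBspos l).ne'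
  field_simp
  ring
end
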